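/- Define for a multi-index \underline{i} ∈ ℤ_{≥0}^∞ with |\underline{i}| = n ≥ 3 the number ⟨τ^{\underline{i}}⟩₀ = (n-3)!/∏_α λ_α(\underline{i})! · δ_{|λ(\underline{i})|, n-3}, where λ(\underline{i}) lists each index k with multiplicity i_k and |λ| is the sum of the entries. Writing ⟨τ_{a}τ_b τ_c τ^{\underline{i}}⟩₀ for the number associated to the multi-index obtained from \underline{i} by adding one to entries a, b, c, the genus-zero topological recursion relation holds: for all a, b, c ≥ 0 and all multi-indices \underline{i}, (1/\underline{i}!)·⟨τ_{a+1}τ_b τ_c τ^{\underline{i}}⟩₀ = ∑_{\underline{i}' + \underline{i}'' = \underline{i}} (1/(\underline{i}'! \underline{i}''!)) · ⟨τ_a τ_0 τ^{\underline{i}'}⟩₀ · ⟨τ_b τ_c τ_0 τ^{\underline{i}''}⟩₀, where \underline{i}! = ∏_k i_k! and the sum runs over all decompositions of \underline{i} as an entrywise sum of two multi-indices. -/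

import Mathlib

/-- Total size `|i| = ∑ i_k` of a multi-index. -/
def mSize (i : ℕ →₀ ℕ) : ℕ := i.sum fun _ m => m

/-- `|λ(i)| = ∑ k·i_k`. -/
def lamSize (i : ℕ →₀ ℕ) : ℕ := i.sum fun k m => k * m

/-- `∏_α λ_α(i)! = ∏_k (k!)^{i_k}`. -/
def lamFact (i : ℕ →₀ ℕ) : ℚ := i.prod fun k m => ((Nat.factorial k : ℚ)) ^ m

/-- `i! = ∏_k i_k!`. -/
def mFact (i : ℕ →₀ ℕ) : ℚ := i.prod fun _ m => (Nat.factorial m : ℚ)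

/-- Genus zero ψ-class intersection number
`⟨τ^i⟩₀ = (n-3)!/∏ λ_α!` if `∑ k·i_k = n - 3` (with `n = |i| ≥ 3`), and `0` otherwise. -/
noncomputable def inter (i : ℕ →₀ ℕ) : ℚ :=
  if lamSize i + 3 = mSize i then (Nat.factorial (mSize i - 3) : ℚ) / lamFact i else 0

namespace TRR

lemma mSize_add (x y : ℕ →₀ ℕ) : mSize (x + y) = mSize x + mSize y :=
  Finsupp.sum_add_index' (fun _ => rfl) (fun _ _ _ => rfl)

lemma lamSize_add (x y : ℕ →₀ ℕ) : lamSize (x + y) = lamSize x + lamSize y :=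
  Finsupp.sum_add_index' (fun a => by simp) (fun a b₁ b₂ => by ring)

lemma lamFact_add (x y : ℕ →₀ ℕ) : lamFact (x + y) = lamFact x * lamFact y :=
  Finsupp.prod_add_index' (fun a => by simp) (fun a b₁ b₂ => by rw [pow_add])

lemma mSize_single (k : ℕ) : mSize (Finsupp.single k 1) = 1 :=
  Finsupp.sum_single_index rfl

lemma lamSize_single (k : ℕ) : lamSize (Finsupp.single k 1) = k := by
  unfold lamSize
  rw [Finsupp.sum_single_index (by simp)]
  simp

lemma lamFact_single (k : ℕ) : lamFact (Finsupp.single k 1) = (Nat.factorial k : ℚ) := by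
  unfold lamFact
  rw [Finsupp.prod_single_index (by simp)]
  simp

lemma mFact_pos (i : ℕ →₀ ℕ) : 0 < mFact i := by
  apply Finset.prod_pos
  intro k _
  show (0:ℚ) < ((i k).factorial : ℚ)
  exact_mod_cast Nat.factorial_pos (i k)

lemma lamFact_pos (i : ℕ →₀ ℕ) : 0 < lamFact i := by
  apply Finset.prod_pos
  intro k _
  show (0:ℚ) < ((k.factorial : ℚ)) ^ (i k)
  positivity

lemma mSize_zero : mSize 0 = 0 := rfl

lemma mSize_eq_zero {i : ℕ →₀ ℕ} (h : mSize i = 0) : i = 0 := by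
  ext k
  simp only [Finsupp.coe_zero, Pi.zero_apply]
  by_contra hk
  have hk' : k ∈ i.support := Finsupp.mem_support_iff.mpr hk
  have : i k ≤ mSize i := Finset.single_le_sum (f := fun k => i k) (fun _ _ => Nat.zero_le _) hk'
  omega

lemma mSize_cast (i : ℕ →₀ ℕ) : (mSize i : ℚ) = ∑ k ∈ i.support, (i k : ℚ) := by
  unfold mSize Finsupp.sum
  push_cast
  rfl

lemma lamSize_cast (i : ℕ →₀ ℕ) : (lamSize i : ℚ) = ∑ k ∈ i.support, (k : ℚ) * (i k : ℚ) := by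
  unfold lamSize Finsupp.sum
  push_cast
  rfl

lemma mFact_add_single (j : ℕ →₀ ℕ) (k : ℕ) :
    mFact (j + Finsupp.single k 1) = ((j k : ℚ) + 1) * mFact j := by
  classical
  set f : ℕ →₀ ℕ := j + Finsupp.single k 1 with hf
  set s : Finset ℕ := f.support with hs
  have hfk : f k = j k + 1 := by rw [hf]; simp
  have hfx : ∀ x, x ≠ k → f x = j x := by
    intro x hx
    rw [hf]
    simp [Finsupp.single_apply, Ne.symm hx]
  have hks : k ∈ s := by
    rw [hs, Finsupp.mem_support_iff, hfk]
    omega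
  have hsub : j.support ⊆ s := by
    intro x hx
    rw [Finsupp.mem_support_iff] at hx ⊢
    by_cases hxk : x = k
    · subst hxk; rw [hfk]; omega
    · rw [hfx x hxk]; exact hx
  have h1 : mFact f = ∏ x ∈ s, (Nat.factorial (f x) : ℚ) :=
    Finsupp.prod_of_support_subset f (by rw [hs]) _ (fun _ _ => by simp)
  have h2 : mFact j = ∏ x ∈ s, (Nat.factorial (j x) : ℚ) :=
    Finsupp.prod_of_support_subset j hsub _ (fun _ _ => by simp)
  rw [h1, h2, ← Finset.mul_prod_erase s _ hks, ← Finset.mul_prod_erase s _ hks]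
  have hrest : ∏ x ∈ s.erase k, (Nat.factorial (f x) : ℚ)
      = ∏ x ∈ s.erase k, (Nat.factorial (j x) : ℚ) := by
    apply Finset.prod_congr rfl
    intro x hx
    rw [hfx x (Finset.ne_of_mem_erase hx)]
  rw [hrest, hfk, Nat.factorial_succ]
  push_cast
  ring



def wsum (i : ℕ →₀ ℕ) : ℤ := (mSize i : ℤ) - (lamSize i : ℤ)

noncomputable def Bq (i : ℕ →₀ ℕ) : ℚ := (Nat.factorial (mSize i) : ℚ) / mFact i

noncomputable def FP (s : ℕ →₀ ℕ) (r : ℤ) : ℚ :=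
  if s = 0 then (if r = 0 then 1 else 0)
  else if wsum s = r then (r : ℚ) * (Nat.factorial (mSize s - 1) : ℚ) / mFact s else 0

noncomputable def T (i : ℕ →₀ ℕ) (r : ℤ) : ℚ :=
  ∑ q ∈ Finset.HasAntidiagonal.antidiagonal i, FP q.1 r * Bq q.2

lemma sub_add_single {i : ℕ →₀ ℕ} {k : ℕ} (hk : i k ≠ 0) :
    (i - Finsupp.single k 1) + Finsupp.single k 1 = i := by
  ext x
  simp only [Finsupp.add_apply, Finsupp.tsub_apply, Finsupp.single_apply]
  by_cases hxk : k = x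
  · subst hxk; simp; omega
  · simp [hxk]

lemma wsum_add (x y : ℕ →₀ ℕ) : wsum (x + y) = wsum x + wsum y := by
  unfold wsum
  rw [mSize_add, lamSize_add]
  push_cast
  ring

lemma wsum_single (k : ℕ) : wsum (Finsupp.single k 1) = 1 - (k : ℤ) := by
  unfold wsum
  rw [mSize_single, lamSize_single]
  norm_num

lemma eq_single_of_mSize_one {s : ℕ →₀ ℕ} (h : mSize s = 1) :
    ∃ k, s = Finsupp.single k 1 := by
  have hs0 : s ≠ 0 := by
    intro h0
    rw [h0] at h
    simp [mSize_zero] at h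
  obtain ⟨k, hk⟩ := Finsupp.ne_iff.mp hs0
  simp only [Finsupp.coe_zero, Pi.zero_apply] at hk
  have hk' : k ∈ s.support := Finsupp.mem_support_iff.mpr hk
  have h1 : s k ≤ mSize s := Finset.single_le_sum (f := fun k => s k) (fun _ _ => Nat.zero_le _) hk'
  refine ⟨k, ?_⟩
  ext x
  rcases eq_or_ne x k with rfl | hxk
  · rw [Finsupp.single_eq_same]
    omega
  · simp only [Finsupp.single_apply, if_neg (Ne.symm hxk)]
    by_contra hx
    have hx' : x ∈ s.support := Finsupp.mem_support_iff.mpr hx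
    have hsub : ({k, x} : Finset ℕ) ⊆ s.support := by
      intro y hy
      simp only [Finset.mem_insert, Finset.mem_singleton] at hy
      rcases hy with rfl | rfl <;> assumption
    have h2 : ∑ y ∈ ({k, x} : Finset ℕ), s y ≤ mSize s :=
      Finset.sum_le_sum_of_subset_of_nonneg hsub (fun _ _ _ => Nat.zero_le _)
    rw [Finset.sum_pair (Ne.symm hxk)] at h2
    omega

lemma mFact_single (k : ℕ) : mFact (Finsupp.single k 1) = 1 := by
  unfold mFact
  rw [Finsupp.prod_single_index (by simp)]
  simp

/-- head recursion for the first-passage weight -/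
lemma FP_rec (s : ℕ →₀ ℕ) (r : ℤ) (hr : 1 ≤ r) :
    FP s r = ∑ k ∈ s.support, FP (s - Finsupp.single k 1) (r + k - 1) := by
  classical
  by_cases hs : s = 0
  · subst hs
    simp [FP, show r ≠ 0 by omega]
  by_cases hw : wsum s = r
  case neg =>
    -- both sides vanish
    rw [FP, if_neg hs, if_neg hw]
    refine (Finset.sum_eq_zero ?_).symm
    intro k hk
    have hk0 : s k ≠ 0 := Finsupp.mem_support_iff.mp hk
    have hadd := sub_add_single hk0
    by_cases h0 : s - Finsupp.single k 1 = 0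
    · rw [FP, if_pos h0]
      rw [h0, zero_add] at hadd
      have : wsum s = 1 - (k : ℤ) := by rw [← hadd, wsum_single]
      have : r + k - 1 ≠ 0 := by
        intro hc
        apply hw
        omega
      rw [if_neg this]
    · rw [FP, if_neg h0]
      have hw' : wsum (s - Finsupp.single k 1) ≠ r + k - 1 := by
        intro hc
        apply hw
        have := wsum_add (s - Finsupp.single k 1) (Finsupp.single k 1)
        rw [hadd, wsum_single] at this
        omega
      rw [if_neg hw']
  case pos =>
    -- main case
    by_cases h1 : mSize s = 1
    · obtain ⟨k, rfl⟩ := eq_single_of_mSize_one h1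
      have hk : (1:ℤ) - k = r := by rw [← wsum_single k, hw]
      have hk0 : k = 0 := by omega
      subst hk0
      have hr1 : r = 1 := by omega
      subst hr1
      rw [Finsupp.support_single_ne_zero _ (by norm_num)]
      rw [Finset.sum_singleton]
      have : Finsupp.single 0 1 - Finsupp.single 0 1 = 0 := by simp
      rw [this]
      have hLv : FP (Finsupp.single 0 1) 1 = 1 := by
        rw [FP, if_neg (by simp [Finsupp.single_eq_zero]),
          if_pos (by rw [wsum_single]; norm_num)]
        rw [mSize_single, mFact_single]
        norm_num
      have hRv : FP 0 (1 + ((0:ℕ):ℤ) - 1) = 1 := by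
        rw [FP, if_pos rfl]
        norm_num
      rw [hLv, hRv]
    · -- mSize s ≥ 2
      have hm0 : s ≠ 0 := hs
      have hm1 : 1 ≤ mSize s := by
        rcases Nat.eq_zero_or_pos (mSize s) with h | h
        · exact absurd (mSize_eq_zero h) hs
        · exact h
      have hm2 : 2 ≤ mSize s := by omega
      -- each term
      have hterm : ∀ k ∈ s.support,
          FP (s - Finsupp.single k 1) (r + k - 1)
            = (((r : ℚ) + k - 1) * (s k : ℚ)) * ((Nat.factorial (mSize s - 2) : ℚ) / mFact s) := by
        intro k hk
        have hk0 : s k ≠ 0 := Finsupp.mem_support_iff.mp hk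
        have hadd := sub_add_single hk0
        set j := s - Finsupp.single k 1 with hj
        have hms : mSize s = mSize j + 1 := by
          conv_lhs => rw [← hadd]
          rw [mSize_add, mSize_single]
        have hj0 : j ≠ 0 := by
          intro hc
          rw [hc] at hms
          rw [mSize_zero] at hms
          omega
        have hwj : wsum j = r + k - 1 := by
          have := wsum_add j (Finsupp.single k 1)
          rw [hadd, wsum_single, hw] at this
          omega
        rw [FP, if_neg hj0, if_pos hwj]
        have hjk : (j k : ℚ) + 1 = (s k : ℚ) := by
          have : j k + 1 = s k := by
            rw [hj]
            rw [Finsupp.tsub_apply, Finsupp.single_eq_same]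
            omega
          exact_mod_cast this
        have hmf : mFact s = (s k : ℚ) * mFact j := by
          conv_lhs => rw [← hadd]
          rw [mFact_add_single, hjk]
        have hmsz : mSize j - 1 = mSize s - 2 := by omega
        rw [hmsz, hmf]
        have hmJ : mFact j ≠ 0 := ne_of_gt (mFact_pos j)
        have hsk : (s k : ℚ) ≠ 0 := by exact_mod_cast hk0
        push_cast
        field_simp
      rw [Finset.sum_congr rfl hterm]
      rw [← Finset.sum_mul]
      have hsum : ∑ k ∈ s.support, (((r : ℚ) + k - 1) * (s k : ℚ))
          = (r : ℚ) * (mSize s : ℚ) - (mSize s : ℚ) + (lamSize s : ℚ) := by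
        rw [mSize_cast, lamSize_cast]
        rw [Finset.mul_sum, ← Finset.sum_sub_distrib, ← Finset.sum_add_distrib]
        apply Finset.sum_congr rfl
        intro k _
        ring
      rw [hsum]
      have hL : (lamSize s : ℚ) = (mSize s : ℚ) - (r : ℚ) := by
        have : (mSize s : ℤ) - (lamSize s : ℤ) = r := hw
        have h2 : (lamSize s : ℤ) = (mSize s : ℤ) - r := by omega
        exact_mod_cast congrArg (fun z : ℤ => (z : ℚ)) h2
      rw [FP, if_neg hs, if_pos hw]
      have hfac : (Nat.factorial (mSize s - 1) : ℚ)
          = ((mSize s : ℚ) - 1) * (Nat.factorial (mSize s - 2) : ℚ) := by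
        have h : mSize s - 1 = (mSize s - 2) + 1 := by omega
        rw [h, Nat.factorial_succ]
        have : ((mSize s - 2 : ℕ) : ℚ) = (mSize s : ℚ) - 2 := by
          push_cast [Nat.cast_sub hm2]
          ring
        push_cast
        rw [this]
        ring
      rw [hfac, hL]
      ring

lemma T_zero (i : ℕ →₀ ℕ) : T i 0 = Bq i := by
  classical
  unfold T
  rw [Finset.sum_eq_single ((0 : ℕ →₀ ℕ), i)]
  · rw [FP, if_pos rfl, if_pos rfl]
    simp
  · intro q hq hne
    rw [Finset.HasAntidiagonal.mem_antidiagonal] at hq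
    by_cases h0 : q.1 = 0
    · exfalso
      apply hne
      have : q.2 = i := by rw [← hq, h0, zero_add]
      rw [← h0, ← this]
    · rw [FP, if_neg h0]
      split_ifs with h
      · push_cast
        ring
      · ring
  · intro h
    exfalso
    apply h
    rw [Finset.HasAntidiagonal.mem_antidiagonal]
    exact zero_add i

lemma T_rec (i : ℕ →₀ ℕ) (r : ℤ) (hr : 1 ≤ r) :
    T i r = ∑ k ∈ i.support, T (i - Finsupp.single k 1) (r + (k : ℤ) - 1) := by
  classical
  unfold T
  have step1 : ∀ q ∈ Finset.HasAntidiagonal.antidiagonal i,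
      FP q.1 r * Bq q.2
        = ∑ k ∈ q.1.support, FP (q.1 - Finsupp.single k 1) (r + (k : ℤ) - 1) * Bq q.2 := by
    intro q _
    rw [FP_rec q.1 r hr, Finset.sum_mul]
  rw [Finset.sum_congr rfl step1]
  rw [Finset.sum_sigma' (Finset.HasAntidiagonal.antidiagonal i) (fun q => q.1.support)
    (fun q k => FP (q.1 - Finsupp.single k 1) (r + (k : ℤ) - 1) * Bq q.2)]
  rw [Finset.sum_sigma' (i.support) (fun k => Finset.HasAntidiagonal.antidiagonal (i - Finsupp.single k 1))
    (fun k q => FP q.1 (r + (k : ℤ) - 1) * Bq q.2)]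
  apply Finset.sum_nbij'
    (i := fun x => ⟨x.2, (x.1.1 - Finsupp.single x.2 1, x.1.2)⟩)
    (j := fun x => ⟨(x.2.1 + Finsupp.single x.1 1, x.2.2), x.1⟩)
  · rintro ⟨⟨q1, q2⟩, k⟩ hx
    simp only [Finset.mem_sigma, Finset.HasAntidiagonal.mem_antidiagonal] at hx ⊢
    obtain ⟨hq, hk⟩ := hx
    have hk1 : q1 k ≠ 0 := Finsupp.mem_support_iff.mp hk
    constructor
    · rw [Finsupp.mem_support_iff]
      have : q1 k + q2 k = i k := by rw [← hq, Finsupp.add_apply]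
      omega
    · ext x
      have hqx : q1 x + q2 x = i x := by rw [← hq, Finsupp.add_apply]
      rw [Finsupp.add_apply, Finsupp.tsub_apply, Finsupp.tsub_apply]
      rcases eq_or_ne k x with rfl | hkx
      · rw [Finsupp.single_eq_same]
        omega
      · rw [Finsupp.single_eq_of_ne' hkx]
        omega
  · rintro ⟨k, ⟨q1, q2⟩⟩ hx
    simp only [Finset.mem_sigma, Finset.HasAntidiagonal.mem_antidiagonal] at hx ⊢
    obtain ⟨hk, hq⟩ := hx
    have hik : i k ≠ 0 := Finsupp.mem_support_iff.mp hk
    constructor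
    · ext x
      have hqx : q1 x + q2 x = i x - (Finsupp.single k 1) x := by
        rw [← Finsupp.tsub_apply, ← hq, Finsupp.add_apply]
      rw [Finsupp.add_apply, Finsupp.add_apply]
      rcases eq_or_ne k x with rfl | hkx
      · rw [Finsupp.single_eq_same] at hqx ⊢
        omega
      · rw [Finsupp.single_eq_of_ne' hkx] at hqx ⊢
        omega
    · rw [Finsupp.mem_support_iff, Finsupp.add_apply, Finsupp.single_eq_same]
      omega
  · rintro ⟨⟨q1, q2⟩, k⟩ hx
    simp only [Finset.mem_sigma, Finset.HasAntidiagonal.mem_antidiagonal] at hx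
    obtain ⟨hq, hk⟩ := hx
    have hk1 : q1 k ≠ 0 := Finsupp.mem_support_iff.mp hk
    have hq1 : q1 - Finsupp.single k 1 + Finsupp.single k 1 = q1 := sub_add_single hk1
    rw [hq1]
  · rintro ⟨k, ⟨q1, q2⟩⟩ hx
    have hq1 : q1 + Finsupp.single k 1 - Finsupp.single k 1 = q1 := by
      ext x
      rw [Finsupp.tsub_apply, Finsupp.add_apply]
      rcases eq_or_ne k x with rfl | hkx
      · rw [Finsupp.single_eq_same]
        omega
      · rw [Finsupp.single_eq_of_ne' hkx]
        omega
    rw [hq1]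
  · rintro ⟨⟨q1, q2⟩, k⟩ _
    rfl

lemma T_eq_B : ∀ n (i : ℕ →₀ ℕ), mSize i = n → ∀ r : ℤ, 0 ≤ r → r ≤ wsum i → T i r = Bq i := by
  intro n
  induction n using Nat.strong_induction_on with
  | _ n ih =>
    intro i hi r hr0 hrw
    rcases eq_or_lt_of_le hr0 with hr | hr
    · rw [← hr]
      exact T_zero i
    have hr1 : 1 ≤ r := hr
    have hi0 : i ≠ 0 := by
      intro h0
      subst h0
      unfold wsum at hrw
      rw [mSize_zero] at hrw
      simp [lamSize] at hrw
      omega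
    have hm1 : 1 ≤ mSize i := by
      rcases Nat.eq_zero_or_pos (mSize i) with h | h
      · exact absurd (mSize_eq_zero h) hi0
      · exact h
    rw [T_rec i r hr1]
    have hterm : ∀ k ∈ i.support,
        T (i - Finsupp.single k 1) (r + (k : ℤ) - 1)
          = (i k : ℚ) * ((Nat.factorial (mSize i - 1) : ℚ) / mFact i) := by
      intro k hk
      have hk0 : i k ≠ 0 := Finsupp.mem_support_iff.mp hk
      have hadd := sub_add_single hk0
      set j := i - Finsupp.single k 1 with hj
      have hms : mSize i = mSize j + 1 := by
        conv_lhs => rw [← hadd]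
        rw [mSize_add, mSize_single]
      have hwj : wsum i = wsum j + (1 - (k : ℤ)) := by
        conv_lhs => rw [← hadd]
        rw [wsum_add, wsum_single]
      have hIH : T j (r + (k : ℤ) - 1) = Bq j := by
        apply ih (mSize j) (by omega) j rfl
        · omega
        · omega
      rw [hIH]
      unfold Bq
      have hjk : (j k : ℚ) + 1 = (i k : ℚ) := by
        have : j k + 1 = i k := by
          rw [hj, Finsupp.tsub_apply, Finsupp.single_eq_same]
          omega
        exact_mod_cast this
      have hmf : mFact i = (i k : ℚ) * mFact j := by
        conv_lhs => rw [← hadd]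
        rw [mFact_add_single, hjk]
      have hmsz : mSize j = mSize i - 1 := by omega
      rw [hmsz, hmf]
      have hmJ : mFact j ≠ 0 := ne_of_gt (mFact_pos j)
      have hik : (i k : ℚ) ≠ 0 := by exact_mod_cast hk0
      field_simp
    rw [Finset.sum_congr rfl hterm, ← Finset.sum_mul, ← mSize_cast]
    unfold Bq
    have hfac : (Nat.factorial (mSize i) : ℚ)
        = (mSize i : ℚ) * (Nat.factorial (mSize i - 1) : ℚ) := by
      have h : mSize i = (mSize i - 1) + 1 := by omega
      conv_lhs => rw [h]
      rw [Nat.factorial_succ]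
      push_cast [← h]
      ring
    rw [hfac]
    ring

end TRR

open TRR

/-- Witten's genus zero topological recursion relation:
`(1/i!)·⟨τ_{a+1}τ_bτ_cτ^i⟩₀
  = ∑_{i'+i''=i} (1/(i'! i''!))·⟨τ_aτ_0τ^{i'}⟩₀·⟨τ_bτ_cτ_0τ^{i''}⟩₀`. -/
theorem topological_recursion (a b c : ℕ) (i : ℕ →₀ ℕ) :
    (1 / mFact i) *
      inter (i + Finsupp.single (a + 1) 1 + Finsupp.single b 1 + Finsupp.single c 1) =
    ∑ p ∈ Finset.HasAntidiagonal.antidiagonal i,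
      (1 / (mFact p.1 * mFact p.2)) *
        (inter (p.1 + Finsupp.single a 1 + Finsupp.single 0 1) *
          inter (p.2 + Finsupp.single b 1 + Finsupp.single c 1 + Finsupp.single 0 1)) := by
  classical
  have hfacne : ∀ n : ℕ, (Nat.factorial n : ℚ) ≠ 0 := fun n =>
    Nat.cast_ne_zero.mpr (Nat.factorial_ne_zero n)
  set j := i + Finsupp.single (a + 1) 1 + Finsupp.single b 1 + Finsupp.single c 1 with hj
  have hjm : mSize j = mSize i + 3 := by
    rw [hj, mSize_add, mSize_add, mSize_add, mSize_single, mSize_single, mSize_single]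
  have hjl : lamSize j = lamSize i + (a + 1) + b + c := by
    rw [hj, lamSize_add, lamSize_add, lamSize_add, lamSize_single, lamSize_single,
      lamSize_single]
  have hjf : lamFact j = lamFact i * (Nat.factorial (a + 1) : ℚ) * (Nat.factorial b : ℚ)
      * (Nat.factorial c : ℚ) := by
    rw [hj, lamFact_add, lamFact_add, lamFact_add, lamFact_single, lamFact_single,
      lamFact_single]
  by_cases hg : lamSize i + a + b + c + 1 = mSize i
  case neg =>
    -- everything vanishes
    have hL : inter j = 0 := by
      rw [inter, if_neg]
      omega
    rw [hL, mul_zero]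
    refine (Finset.sum_eq_zero ?_).symm
    intro p hp
    rw [Finset.HasAntidiagonal.mem_antidiagonal] at hp
    have h1m : mSize p.1 + mSize p.2 = mSize i := by rw [← hp, mSize_add]
    have h1l : lamSize p.1 + lamSize p.2 = lamSize i := by rw [← hp, lamSize_add]
    set j1 := p.1 + Finsupp.single a 1 + Finsupp.single 0 1 with hj1
    set j2 := p.2 + Finsupp.single b 1 + Finsupp.single c 1 + Finsupp.single 0 1 with hj2
    have hj1m : mSize j1 = mSize p.1 + 2 := by
      rw [hj1, mSize_add, mSize_add, mSize_single, mSize_single]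
    have hj1l : lamSize j1 = lamSize p.1 + a := by
      rw [hj1, lamSize_add, lamSize_add, lamSize_single, lamSize_single]
      omega
    have hj2m : mSize j2 = mSize p.2 + 3 := by
      rw [hj2, mSize_add, mSize_add, mSize_add, mSize_single, mSize_single, mSize_single]
    have hj2l : lamSize j2 = lamSize p.2 + b + c := by
      rw [hj2, lamSize_add, lamSize_add, lamSize_add, lamSize_single, lamSize_single,
        lamSize_single]
      omega
    by_cases hc1 : lamSize j1 + 3 = mSize j1
    · have hc2 : ¬ (lamSize j2 + 3 = mSize j2) := by omega
      rw [inter, if_pos hc1, inter, if_neg hc2, mul_zero, mul_zero]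
    · rw [inter, if_neg hc1, zero_mul, mul_zero]
  case pos =>
    -- main case
    have hkey : T i ((a : ℤ) + 1) = Bq i := by
      apply T_eq_B (mSize i) i rfl
      · omega
      · unfold wsum
        omega
    have hterm : ∀ p ∈ Finset.HasAntidiagonal.antidiagonal i,
        (1 / (mFact p.1 * mFact p.2)) *
          (inter (p.1 + Finsupp.single a 1 + Finsupp.single 0 1) *
            inter (p.2 + Finsupp.single b 1 + Finsupp.single c 1 + Finsupp.single 0 1))
        = (1 / ((Nat.factorial (a+1) : ℚ) * (Nat.factorial b : ℚ) * (Nat.factorial c : ℚ)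
            * lamFact i)) * (FP p.1 ((a : ℤ) + 1) * Bq p.2) := by
      intro p hp
      rw [Finset.HasAntidiagonal.mem_antidiagonal] at hp
      have h1m : mSize p.1 + mSize p.2 = mSize i := by rw [← hp, mSize_add]
      have h1l : lamSize p.1 + lamSize p.2 = lamSize i := by rw [← hp, lamSize_add]
      have h1f : lamFact p.1 * lamFact p.2 = lamFact i := by rw [← hp, lamFact_add]
      set j1 := p.1 + Finsupp.single a 1 + Finsupp.single 0 1 with hj1
      set j2 := p.2 + Finsupp.single b 1 + Finsupp.single c 1 + Finsupp.single 0 1 with hj2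
      have hj1m : mSize j1 = mSize p.1 + 2 := by
        rw [hj1, mSize_add, mSize_add, mSize_single, mSize_single]
      have hj1l : lamSize j1 = lamSize p.1 + a := by
        rw [hj1, lamSize_add, lamSize_add, lamSize_single, lamSize_single]
        omega
      have hj1f : lamFact j1 = lamFact p.1 * (Nat.factorial a : ℚ) := by
        rw [hj1, lamFact_add, lamFact_add, lamFact_single, lamFact_single]
        simp [Nat.factorial]
      have hj2m : mSize j2 = mSize p.2 + 3 := by
        rw [hj2, mSize_add, mSize_add, mSize_add, mSize_single, mSize_single, mSize_single]
      have hj2l : lamSize j2 = lamSize p.2 + b + c := by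
        rw [hj2, lamSize_add, lamSize_add, lamSize_add, lamSize_single, lamSize_single,
          lamSize_single]
        omega
      have hj2f : lamFact j2 = lamFact p.2 * (Nat.factorial b : ℚ) * (Nat.factorial c : ℚ) := by
        rw [hj2, lamFact_add, lamFact_add, lamFact_add, lamFact_single, lamFact_single,
          lamFact_single]
        simp [Nat.factorial]
      by_cases hc1 : lamSize j1 + 3 = mSize j1
      · have hc2 : lamSize j2 + 3 = mSize j2 := by omega
        have hm1pos : 1 ≤ mSize p.1 := by omega
        have hp1ne : p.1 ≠ 0 := by
          intro h0
          have := mSize_zero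
          rw [h0] at hm1pos
          rw [this] at hm1pos
          omega
        have hwp1 : wsum p.1 = (a : ℤ) + 1 := by
          unfold wsum
          omega
        rw [inter, if_pos hc1, inter, if_pos hc2]
        rw [FP, if_neg hp1ne, if_pos hwp1]
        unfold Bq
        rw [hj1f, hj2f, hj1m, hj2m]
        have e1 : mSize p.1 + 2 - 3 = mSize p.1 - 1 := by omega
        have e2 : mSize p.2 + 3 - 3 = mSize p.2 := by omega
        rw [e1, e2]
        have hfs : (Nat.factorial (a+1) : ℚ) = ((a : ℚ) + 1) * (Nat.factorial a : ℚ) := by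
          rw [Nat.factorial_succ]
          push_cast
          ring
        rw [hfs, ← h1f]
        have n1 := ne_of_gt (mFact_pos p.1)
        have n2 := ne_of_gt (mFact_pos p.2)
        have n3 := ne_of_gt (lamFact_pos p.1)
        have n4 := ne_of_gt (lamFact_pos p.2)
        have n5 := hfacne a
        have n6 := hfacne b
        have n7 := hfacne c
        have na1 : ((a : ℚ) + 1) ≠ 0 := by positivity
        push_cast
        field_simp
      · -- both sides vanish
        have hFP : FP p.1 ((a : ℤ) + 1) = 0 := by
          rw [FP]
          by_cases h0 : p.1 = 0
          · rw [if_pos h0, if_neg (by omega)]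
          · rw [if_neg h0, if_neg]
            unfold wsum
            omega
        rw [inter, if_neg hc1, hFP]
        ring
    rw [Finset.sum_congr rfl hterm, ← Finset.mul_sum]
    have hT : ∑ p ∈ Finset.HasAntidiagonal.antidiagonal i, FP p.1 ((a : ℤ) + 1) * Bq p.2 = T i ((a : ℤ) + 1) :=
      rfl
    rw [hT, hkey]
    unfold Bq
    have hL : inter j = (Nat.factorial (mSize i) : ℚ)
        / (lamFact i * (Nat.factorial (a + 1) : ℚ) * (Nat.factorial b : ℚ)
          * (Nat.factorial c : ℚ)) := by
      rw [inter, if_pos (by omega), hjf, hjm]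
      have e : mSize i + 3 - 3 = mSize i := by omega
      rw [e]
    rw [hL]
    have n1 := ne_of_gt (mFact_pos i)
    have n2 := ne_of_gt (lamFact_pos i)
    have n3 := hfacne (a+1)
    have n4 := hfacne b
    have n5 := hfacne c
    field_simp
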